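/- Consider a D-layer linear network with weight matrices W_k ∈ ℝ^{d_{k+1}×d_k} (k = 1,…,D, with d_1 = d_x, d_{D+1} = d_y), where the entries of all W_k are jointly independent and the entries of W_k are i.i.d. centered Gaussians of variance σ_k². Let Σ_x ∈ ℝ^{d_x×d_x} be symmetric positive semidefinite, and define the sharpness T(W_1,…,W_D) = Σ_{k=1}^D Tr[A_kᵀA_k]·Tr[B_k Σ_x B_kᵀ] with A_k = W_D⋯W_{k+1} (A_D = I), B_k = W_{k−1}⋯W_1 (B_1 = I). Then E[T] = d_y · (∏_{k=2}^D d_k) · Tr(Σ_x) · Σ_{k=1}^D ∏_{j≠k, 1≤j≤D} σ_j². In particular, if σ_k² = σ² and d_k = d for all intermediate dimensions, then E[T] = D · d_y · Tr(Σ_x) · (dσ²)^{D−1}. -/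

import Mathlib

open Matrix MeasureTheory ProbabilityTheory Finset

/-- The product `W_{i+l-1} ⋯ W_i` of a chain of matrices with dimensions `d`. -/
def mulChain (d : ℕ → ℕ) (W : ∀ k, Matrix (Fin (d (k + 1))) (Fin (d k)) ℝ) (i : ℕ) :
    (l : ℕ) → Matrix (Fin (d (i + l))) (Fin (d i)) ℝ
  | 0 => (1 : Matrix (Fin (d i)) (Fin (d i)) ℝ)
  | l + 1 => W (i + l) * mulChain d W i l

/-- The product `W_{l-1} ⋯ W_0` of the first `l` matrices of a chain. -/
def prodUpTo (d : ℕ → ℕ) (W : ∀ k, Matrix (Fin (d (k + 1))) (Fin (d k)) ℝ) :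
    (l : ℕ) → Matrix (Fin (d l)) (Fin (d 0)) ℝ
  | 0 => 1
  | l + 1 => W l * prodUpTo d W l

open Real Filter
open scoped NNReal ENNReal



lemma integrable_sq_mul_exp_neg_mul_sq {b : ℝ} (hb : 0 < b) :
    Integrable fun x : ℝ => x ^ 2 * Real.exp (-b * x ^ 2) := by
  have h := integrable_rpow_mul_exp_neg_mul_sq hb (by norm_num : (-1:ℝ) < 2)
  have : ∀ x : ℝ, x ^ (2:ℝ) = x ^ (2:ℕ) := fun x => by
    rw [show (2:ℝ) = ((2:ℕ):ℝ) by norm_num, Real.rpow_natCast]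
  simpa [this] using h

lemma integral_sq_mul_exp_neg_mul_sq {b : ℝ} (hb : 0 < b) :
    ∫ x : ℝ, x ^ 2 * Real.exp (-b * x ^ 2) = Real.sqrt (π / b) / (2 * b) := by
  set f : ℝ → ℝ := fun x => x * Real.exp (-b * x ^ 2) with hf
  set g : ℝ → ℝ := fun x => Real.exp (-b * x ^ 2) - 2 * b * (x ^ 2 * Real.exp (-b * x ^ 2)) with hgdef
  have hderiv : ∀ x : ℝ, HasDerivAt f (g x) x := by
    intro x
    have h1 : HasDerivAt (fun y : ℝ => -b * y ^ 2) (-b * (2 * x)) x := by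
      simpa using (hasDerivAt_pow 2 x).const_mul (-b)
    have h2 := h1.exp
    have h3 := (hasDerivAt_id x).mul h2
    refine h3.congr_deriv ?_
    simp only [g, id]
    ring
  have hg : Integrable g :=
    (integrable_exp_neg_mul_sq hb).sub ((integrable_sq_mul_exp_neg_mul_sq hb).const_mul _)
  have hfcont : Continuous f := by
    exact continuous_id.mul ((continuous_const.mul (continuous_pow 2)).rexp)
  have htop : Tendsto f atTop (nhds 0) := by
    have h := rpow_mul_exp_neg_mul_sq_isLittleO_exp_neg hb 1
    have h2 : Tendsto (fun x : ℝ => Real.exp (-(1/2) * x)) atTop (nhds 0) := by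
      have hl : Tendsto (fun x : ℝ => (1/2 : ℝ) * x) atTop atTop :=
        Tendsto.const_mul_atTop (by norm_num) tendsto_id
      have h4 := (tendsto_exp_neg_atTop_nhds_zero).comp hl
      have : (fun x : ℝ => Real.exp (-(1/2) * x)) = (fun x : ℝ => Real.exp (-x)) ∘ fun x : ℝ => (1/2:ℝ) * x := by
        funext x; simp [Function.comp, neg_mul]
      rw [this]; exact h4
    have h3 := h.isBigO.trans_tendsto h2
    simpa [Real.rpow_one, f] using h3
  have hbot : Tendsto f atBot (nhds 0) := by
    have hneg : Tendsto (fun x : ℝ => -x) atBot atTop := tendsto_neg_atBot_atTop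
    have := htop.comp hneg
    have heq : (fun x : ℝ => f (-x)) = fun x => - f x := by
      funext x; simp only [f, neg_sq]; ring
    rw [show f ∘ (fun x : ℝ => -x) = fun x => f (-x) from rfl, heq] at this
    simpa using this.neg
  have hIoi : ∫ x in Set.Ioi (0:ℝ), g x = 0 - f 0 :=
    integral_Ioi_of_hasDerivAt_of_tendsto' (fun x _ => hderiv x) hg.integrableOn htop
  have hIic : ∫ x in Set.Iic (0:ℝ), g x = f 0 - 0 :=
    integral_Iic_of_hasDerivAt_of_tendsto hfcont.continuousWithinAt
      (fun x _ => hderiv x) hg.integrableOn hbot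
  have hsplit := intervalIntegral.integral_Iic_add_Ioi (b := (0:ℝ)) (μ := volume) hg.integrableOn hg.integrableOn
  have hzero : ∫ x : ℝ, g x = 0 := by
    rw [← hsplit, hIoi, hIic]; ring
  have hsub : ∫ x : ℝ, g x
      = (∫ x : ℝ, Real.exp (-b * x ^ 2)) - 2 * b * ∫ x : ℝ, x ^ 2 * Real.exp (-b * x ^ 2) := by
    rw [hgdef]
    rw [integral_sub (integrable_exp_neg_mul_sq hb)
      ((integrable_sq_mul_exp_neg_mul_sq hb).const_mul _), MeasureTheory.integral_const_mul]
  have hgauss := integral_gaussian b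
  rw [hzero, hgauss] at hsub
  have : 2 * b * ∫ x : ℝ, x ^ 2 * Real.exp (-b * x ^ 2) = Real.sqrt (π / b) := by linarith
  field_simp at this ⊢
  linarith

lemma integral_mul_exp_neg_mul_sq_eq_zero {b : ℝ} (hb : 0 < b) :
    ∫ x : ℝ, x * Real.exp (-b * x ^ 2) = 0 := by
  set u : ℝ → ℝ := fun x => x * Real.exp (-b * x ^ 2) with hu
  have hint : Integrable u := integrable_mul_exp_neg_mul_sq hb
  have hneg : ∀ x : ℝ, u (-x) = - u x := by
    intro x; simp only [u, neg_sq]; ring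
  have h1 : ∫ x in Set.Iic (0:ℝ), u (-x) = ∫ x in Set.Ioi (-(0:ℝ)), u x :=
    integral_comp_neg_Iic 0 u
  have h2 : ∫ x in Set.Iic (0:ℝ), u (-x) = - ∫ x in Set.Iic (0:ℝ), u x := by
    simp_rw [hneg]; exact integral_neg u
  have hsplit := intervalIntegral.integral_Iic_add_Ioi (b := (0:ℝ)) (μ := volume)
    hint.integrableOn hint.integrableOn
  rw [← hsplit]
  rw [neg_zero] at h1
  rw [h1] at h2
  linarith

/-- The measure `gaussianReal 0 v` as a `withDensity` with `NNReal` density. -/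
lemma gaussianReal_eq_withDensity_toNNReal {v : ℝ≥0} (hv : v ≠ 0) :
    gaussianReal 0 v
      = volume.withDensity fun x => ((Real.toNNReal (gaussianPDFReal 0 v x) : ℝ≥0) : ℝ≥0∞) := by
  rw [gaussianReal_of_var_ne_zero _ hv]; rfl

lemma gaussianPDFReal_zero_eq {v : ℝ≥0} (x : ℝ) :
    gaussianPDFReal 0 v x
      = (Real.sqrt (2 * π * v))⁻¹ * Real.exp (-(2 * (v:ℝ))⁻¹ * x ^ 2) := by
  rw [gaussianPDFReal]
  congr 1
  congr 1
  rw [sub_zero]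
  field_simp

lemma integrable_id_gaussianReal (v : ℝ≥0) :
    Integrable (fun x : ℝ => x) (gaussianReal 0 v) := by
  by_cases hv : v = 0
  · subst hv
    rw [gaussianReal_zero_var]
    refine ⟨measurable_id.aestronglyMeasurable, ?_⟩
    rw [HasFiniteIntegral, lintegral_dirac]
    exact ENNReal.coe_lt_top
  · rw [gaussianReal_eq_withDensity_toNNReal hv,
      integrable_withDensity_iff_integrable_smul
        ((measurable_gaussianPDFReal 0 v).real_toNNReal)]
    have hb : 0 < (2 * (v:ℝ))⁻¹ := by positivity
    have heq : (fun x : ℝ => (Real.toNNReal (gaussianPDFReal 0 v x)) • x)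
        = fun x : ℝ => (Real.sqrt (2 * π * v))⁻¹ * (x * Real.exp (-(2 * (v:ℝ))⁻¹ * x ^ 2)) := by
      funext x
      rw [NNReal.smul_def, smul_eq_mul, Real.coe_toNNReal _ (gaussianPDFReal_nonneg 0 v x),
        gaussianPDFReal_zero_eq]
      ring
    rw [heq]
    exact (integrable_mul_exp_neg_mul_sq hb).const_mul _

lemma integral_id_gaussianReal (v : ℝ≥0) :
    ∫ x, x ∂(gaussianReal 0 v) = 0 := by
  by_cases hv : v = 0
  · subst hv; rw [gaussianReal_zero_var, integral_dirac]
  · rw [gaussianReal_eq_withDensity_toNNReal hv,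
      integral_withDensity_eq_integral_smul ((measurable_gaussianPDFReal 0 v).real_toNNReal)]
    have hb : 0 < (2 * (v:ℝ))⁻¹ := by positivity
    have heq : (fun x : ℝ => (Real.toNNReal (gaussianPDFReal 0 v x)) • x)
        = fun x : ℝ => (Real.sqrt (2 * π * v))⁻¹ * (x * Real.exp (-(2 * (v:ℝ))⁻¹ * x ^ 2)) := by
      funext x
      rw [NNReal.smul_def, smul_eq_mul, Real.coe_toNNReal _ (gaussianPDFReal_nonneg 0 v x),
        gaussianPDFReal_zero_eq]
      ring
    rw [heq, MeasureTheory.integral_const_mul, integral_mul_exp_neg_mul_sq_eq_zero hb, mul_zero]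

lemma integrable_sq_gaussianReal (v : ℝ≥0) :
    Integrable (fun x : ℝ => x ^ 2) (gaussianReal 0 v) := by
  by_cases hv : v = 0
  · subst hv
    rw [gaussianReal_zero_var]
    refine ⟨(measurable_id.pow_const 2).aestronglyMeasurable, ?_⟩
    rw [HasFiniteIntegral, lintegral_dirac]
    exact ENNReal.coe_lt_top
  · rw [gaussianReal_eq_withDensity_toNNReal hv,
      integrable_withDensity_iff_integrable_smul
        ((measurable_gaussianPDFReal 0 v).real_toNNReal)]
    have hb : 0 < (2 * (v:ℝ))⁻¹ := by positivity
    have heq : (fun x : ℝ => (Real.toNNReal (gaussianPDFReal 0 v x)) • x ^ 2)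
        = fun x : ℝ => (Real.sqrt (2 * π * v))⁻¹ * (x ^ 2 * Real.exp (-(2 * (v:ℝ))⁻¹ * x ^ 2)) := by
      funext x
      rw [NNReal.smul_def, smul_eq_mul, Real.coe_toNNReal _ (gaussianPDFReal_nonneg 0 v x),
        gaussianPDFReal_zero_eq]
      ring
    rw [heq]
    exact (integrable_sq_mul_exp_neg_mul_sq hb).const_mul _

lemma integral_sq_gaussianReal (v : ℝ≥0) :
    ∫ x, x ^ 2 ∂(gaussianReal 0 v) = v := by
  by_cases hv : v = 0
  · subst hv; rw [gaussianReal_zero_var, integral_dirac]; simp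
  · rw [gaussianReal_eq_withDensity_toNNReal hv,
      integral_withDensity_eq_integral_smul ((measurable_gaussianPDFReal 0 v).real_toNNReal)]
    have hvpos : 0 < (v:ℝ) := by positivity
    have hb : 0 < (2 * (v:ℝ))⁻¹ := by positivity
    have heq : (fun x : ℝ => (Real.toNNReal (gaussianPDFReal 0 v x)) • x ^ 2)
        = fun x : ℝ => (Real.sqrt (2 * π * v))⁻¹ * (x ^ 2 * Real.exp (-(2 * (v:ℝ))⁻¹ * x ^ 2)) := by
      funext x
      rw [NNReal.smul_def, smul_eq_mul, Real.coe_toNNReal _ (gaussianPDFReal_nonneg 0 v x),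
        gaussianPDFReal_zero_eq]
      ring
    rw [heq, MeasureTheory.integral_const_mul, integral_sq_mul_exp_neg_mul_sq hb]
    have h1 : π / (2 * (v:ℝ))⁻¹ = 2 * π * v := by field_simp
    rw [h1]
    have h2 : Real.sqrt (2 * π * v) > 0 := Real.sqrt_pos.mpr (by positivity)
    field_simp


section AuxDefs

variable {d : ℕ → ℕ}

/-- Index type enumerating all entries of all weight matrices. -/
abbrev Idx (D : ℕ) (d : ℕ → ℕ) : Type :=
  Σ j : Fin D, Fin (d ((j : ℕ) + 1)) × Fin (d (j : ℕ))

/-- Reconstruct the chain of weight matrices from a vector of entries. -/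
def recW (D : ℕ) (d : ℕ → ℕ) (v : Idx D d → ℝ) (k : ℕ) :
    Matrix (Fin (d (k + 1))) (Fin (d k)) ℝ :=
  if h : k < D then (fun a b => v ⟨⟨k, h⟩, (a, b)⟩) else 0

lemma recW_eq {D : ℕ} {v : Idx D d → ℝ} {k : ℕ} (h : k < D) :
    recW D d v k = fun a b => v ⟨⟨k, h⟩, (a, b)⟩ := dif_pos h

lemma prodUpTo_congr {W₁ W₂ : ∀ k, Matrix (Fin (d (k + 1))) (Fin (d k)) ℝ} :
    ∀ k, (∀ j, j < k → W₁ j = W₂ j) → prodUpTo d W₁ k = prodUpTo d W₂ k := by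
  intro k
  induction k with
  | zero => intro _; rfl
  | succ k ih =>
    intro h
    show W₁ k * prodUpTo d W₁ k = W₂ k * prodUpTo d W₂ k
    rw [h k (Nat.lt_succ_self k), ih fun j hj => h j (hj.trans (Nat.lt_succ_self k))]

lemma mulChain_congr {W₁ W₂ : ∀ k, Matrix (Fin (d (k + 1))) (Fin (d k)) ℝ} (i : ℕ) :
    ∀ l, (∀ j, i ≤ j → j < i + l → W₁ j = W₂ j) → mulChain d W₁ i l = mulChain d W₂ i l := by
  intro l
  induction l with
  | zero => intro _; rfl
  | succ l ih =>
    intro h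
    show W₁ (i + l) * mulChain d W₁ i l = W₂ (i + l) * mulChain d W₂ i l
    rw [h (i + l) (Nat.le_add_right i l) (by omega),
      ih fun j hj hj' => h j hj (by omega)]

lemma continuous_recW {D : ℕ} (k : ℕ) : Continuous fun v : Idx D d → ℝ => recW D d v k := by
  by_cases h : k < D
  · rw [show (fun v : Idx D d → ℝ => recW D d v k) = fun v => fun a b => v ⟨⟨k, h⟩, (a, b)⟩
      from funext fun v => recW_eq h]
    exact continuous_pi fun a => continuous_pi fun b => continuous_apply _
  · rw [show (fun v : Idx D d → ℝ => recW D d v k) = fun _ => 0 from funext fun v => dif_neg h]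
    exact continuous_const

lemma continuous_prodUpTo_recW {D : ℕ} (k : ℕ) :
    Continuous fun v : Idx D d → ℝ => prodUpTo d (recW D d v) k := by
  induction k with
  | zero => exact continuous_const
  | succ k ih =>
    show Continuous fun v : Idx D d → ℝ => recW D d v k * prodUpTo d (recW D d v) k
    exact (continuous_recW k).matrix_mul ih

lemma continuous_mulChain_recW {D : ℕ} (i : ℕ) (l : ℕ) :
    Continuous fun v : Idx D d → ℝ => mulChain d (recW D d v) i l := by
  induction l with
  | zero => exact continuous_const
  | succ l ih =>
    show Continuous fun v : Idx D d → ℝ => recW D d v (i + l) * mulChain d (recW D d v) i l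
    exact (continuous_recW (i + l)).matrix_mul ih

end AuxDefs

section AuxProb

variable {D : ℕ} {d : ℕ → ℕ} {Ω : Type*} [MeasurableSpace Ω] {μ : Measure Ω}
  {W : ∀ j : ℕ, Ω → Matrix (Fin (d (j + 1))) (Fin (d j)) ℝ} {σ : ℕ → NNReal}

/-- If `F` only depends on coordinates satisfying `Q` and `G` only on those not
satisfying `Q`, then the corresponding random variables are independent. -/
lemma indepFun_split
    (hmeas : ∀ (j : ℕ) a b, Measurable fun ω => W j ω a b)
    (hindep : iIndepFun
      (fun (p : Idx D d) (ω : Ω) => W (p.1 : ℕ) ω p.2.1 p.2.2) μ)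
    (Q : Idx D d → Prop) [DecidablePred Q]
    {F G : (Idx D d → ℝ) → ℝ} (hF : Measurable F) (hG : Measurable G)
    (hFdep : ∀ v v' : Idx D d → ℝ, (∀ p, Q p → v p = v' p) → F v = F v')
    (hGdep : ∀ v v' : Idx D d → ℝ, (∀ p, ¬ Q p → v p = v' p) → G v = G v') :
    IndepFun (fun ω => F fun p => W (p.1 : ℕ) ω p.2.1 p.2.2)
      (fun ω => G fun p => W (p.1 : ℕ) ω p.2.1 p.2.2) μ := by
  classical
  set X : ∀ p : Idx D d, Ω → ℝ := fun p ω => W (p.1 : ℕ) ω p.2.1 p.2.2 with hX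
  have hXmeas : ∀ p, Measurable (X p) := fun p => hmeas _ _ _
  set S : Finset (Idx D d) := Finset.univ.filter Q with hS
  set T : Finset (Idx D d) := Finset.univ.filter (fun p => ¬ Q p) with hT
  have hST : Disjoint S T := by
    rw [Finset.disjoint_left]
    intro p hp hp'
    rw [hS, Finset.mem_filter] at hp
    rw [hT, Finset.mem_filter] at hp'
    exact hp'.2 hp.2
  have h := hindep.indepFun_finset S T hST hXmeas
  have hmemS : ∀ p : Idx D d, Q p → p ∈ S := fun p hp => by
    rw [hS, Finset.mem_filter]; exact ⟨Finset.mem_univ p, hp⟩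
  have hmemT : ∀ p : Idx D d, ¬ Q p → p ∈ T := fun p hp => by
    rw [hT, Finset.mem_filter]; exact ⟨Finset.mem_univ p, hp⟩
  set F' : ((i : S) → ℝ) → ℝ :=
    fun u => F fun p => if hp : Q p then u ⟨p, hmemS p hp⟩ else 0 with hF'def
  set G' : ((i : T) → ℝ) → ℝ :=
    fun u => G fun p => if hp : ¬ Q p then u ⟨p, hmemT p hp⟩ else 0 with hG'def
  have hF' : Measurable F' := by
    apply hF.comp
    apply measurable_pi_lambda
    intro p
    by_cases hp : Q p
    · simp only [dif_pos hp]
      exact measurable_pi_apply _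
    · simp only [dif_neg hp]
      exact measurable_const
  have hG' : Measurable G' := by
    apply hG.comp
    apply measurable_pi_lambda
    intro p
    by_cases hp : ¬ Q p
    · simp only [dif_pos hp]
      exact measurable_pi_apply _
    · simp only [dif_neg hp]
      exact measurable_const
  have h2 := h.comp hF' hG'
  have e1 : (fun ω => F' fun i : S => X i ω) = fun ω => F fun p => X p ω := by
    funext ω
    exact hFdep _ _ fun p hp => by simp only [dif_pos hp]
  have e2 : (fun ω => G' fun i : T => X i ω) = fun ω => G fun p => X p ω := by
    funext ω
    exact hGdep _ _ fun p hp => by simp only [dif_pos hp]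
  have h3 : IndepFun (fun ω => F' fun i : S => X i ω) (fun ω => G' fun i : T => X i ω) μ := h2
  rw [e1, e2] at h3
  exact h3

variable [IsProbabilityMeasure μ]

lemma integrable_entry {j : ℕ} {a : Fin (d (j + 1))} {b : Fin (d j)}
    (hm : Measurable fun ω => W j ω a b)
    (hg : Measure.map (fun ω => W j ω a b) μ = gaussianReal 0 (σ j ^ 2)) :
    Integrable (fun ω => W j ω a b) μ := by
  have h1 := integrable_id_gaussianReal (σ j ^ 2)
  rw [← hg] at h1
  exact (integrable_map_measure measurable_id.aestronglyMeasurable hm.aemeasurable).mp h1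

lemma integral_entry {j : ℕ} {a : Fin (d (j + 1))} {b : Fin (d j)}
    (hm : Measurable fun ω => W j ω a b)
    (hg : Measure.map (fun ω => W j ω a b) μ = gaussianReal 0 (σ j ^ 2)) :
    ∫ ω, W j ω a b ∂μ = 0 := by
  have h2 : ∫ x, x ∂(Measure.map (fun ω => W j ω a b) μ) = ∫ ω, W j ω a b ∂μ :=
    integral_map (f := fun x : ℝ => x) hm.aemeasurable measurable_id.aestronglyMeasurable
  rw [hg, _root_.integral_id_gaussianReal] at h2
  exact h2.symm

lemma integrable_sq_entry {j : ℕ} {a : Fin (d (j + 1))} {b : Fin (d j)}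
    (hm : Measurable fun ω => W j ω a b)
    (hg : Measure.map (fun ω => W j ω a b) μ = gaussianReal 0 (σ j ^ 2)) :
    Integrable (fun ω => W j ω a b * W j ω a b) μ := by
  have h1 := integrable_sq_gaussianReal (σ j ^ 2)
  rw [← hg] at h1
  have h2 := (integrable_map_measure (measurable_id.pow_const 2).aestronglyMeasurable
    hm.aemeasurable).mp h1
  simpa [Function.comp_def, pow_two] using h2

lemma integral_sq_entry {j : ℕ} {a : Fin (d (j + 1))} {b : Fin (d j)}
    (hm : Measurable fun ω => W j ω a b)
    (hg : Measure.map (fun ω => W j ω a b) μ = gaussianReal 0 (σ j ^ 2)) :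
    ∫ ω, W j ω a b * W j ω a b ∂μ = ((σ j : ℝ)) ^ 2 := by
  have h2 : ∫ x, x ^ 2 ∂(Measure.map (fun ω => W j ω a b) μ) = ∫ ω, (W j ω a b) ^ 2 ∂μ :=
    integral_map (f := fun x : ℝ => x ^ 2) hm.aemeasurable
      (measurable_id.pow_const 2).aestronglyMeasurable
  rw [hg, integral_sq_gaussianReal] at h2
  have h3 : ∫ ω, W j ω a b * W j ω a b ∂μ = ∫ ω, (W j ω a b) ^ 2 ∂μ := by
    congr 1; funext ω; ring
  rw [h3, ← h2]
  push_cast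
  rfl


lemma pair_moment
    (hmeas : ∀ (j : ℕ) a b, Measurable fun ω => W j ω a b)
    (hindep : iIndepFun
      (fun (p : Idx D d) (ω : Ω) => W (p.1 : ℕ) ω p.2.1 p.2.2) μ)
    (hgauss : ∀ j : ℕ, j < D → ∀ a b,
      Measure.map (fun ω => W j ω a b) μ = gaussianReal 0 (σ j ^ 2))
    {j : ℕ} (hj : j < D) (a a' : Fin (d (j + 1))) (b c : Fin (d j)) :
    Integrable (fun ω => W j ω a b * W j ω a' c) μ ∧
      ∫ ω, W j ω a b * W j ω a' c ∂μ
        = if a = a' ∧ b = c then ((σ j : ℝ)) ^ 2 else 0 := by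
  by_cases h : a = a' ∧ b = c
  · obtain ⟨rfl, rfl⟩ := h
    rw [if_pos ⟨rfl, rfl⟩]
    exact ⟨integrable_sq_entry (hmeas j a b) (hgauss j hj a b),
      integral_sq_entry (hmeas j a b) (hgauss j hj a b)⟩
  · have hpq : (⟨⟨j, hj⟩, (a, b)⟩ : Idx D d) ≠ ⟨⟨j, hj⟩, (a', c)⟩ := by
      simp only [ne_eq, Sigma.mk.inj_iff, heq_eq_eq, Prod.mk.injEq, true_and]
      tauto
    have hind := hindep.indepFun hpq
    have hi1 : Integrable (fun ω => W j ω a b) μ :=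
      integrable_entry (hmeas j a b) (hgauss j hj a b)
    have hi2 : Integrable (fun ω => W j ω a' c) μ :=
      integrable_entry (hmeas j a' c) (hgauss j hj a' c)
    constructor
    · exact hind.integrable_mul hi1 hi2
    · rw [if_neg h]
      have hmul := hind.integral_mul_eq_mul_integral hi1.aestronglyMeasurable hi2.aestronglyMeasurable
      rw [integral_entry (hmeas j a b) (hgauss j hj a b)] at hmul
      simpa using hmul

lemma step_matrix
    (hmeas : ∀ (j : ℕ) a b, Measurable fun ω => W j ω a b)
    (hindep : iIndepFun
      (fun (p : Idx D d) (ω : Ω) => W (p.1 : ℕ) ω p.2.1 p.2.2) μ)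
    (hgauss : ∀ j : ℕ, j < D → ∀ a b,
      Measure.map (fun ω => W j ω a b) μ = gaussianReal 0 (σ j ^ 2))
    {j : ℕ} (hj : j < D) (M : Ω → Matrix (Fin (d j)) (Fin (d j)) ℝ)
    (hMint : ∀ b c, Integrable (fun ω => M ω b c) μ)
    (hMind : ∀ (a a' : Fin (d (j + 1))) (b c : Fin (d j)),
      IndepFun (fun ω => W j ω a b * W j ω a' c) (fun ω => M ω b c) μ) :
    (∀ a a', Integrable (fun ω => (W j ω * M ω * (W j ω)ᵀ) a a') μ) ∧
      ∀ a a', ∫ ω, (W j ω * M ω * (W j ω)ᵀ) a a' ∂μ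
        = if a = a' then ((σ j : ℝ)) ^ 2 * ∑ x, ∫ ω, M ω x x ∂μ else 0 := by
  have hentry : ∀ (ω : Ω) a a', (W j ω * M ω * (W j ω)ᵀ) a a'
      = ∑ c, ∑ b, W j ω a b * W j ω a' c * M ω b c := by
    intro ω a a'
    rw [Matrix.mul_apply]
    refine Finset.sum_congr rfl fun c _ => ?_
    rw [Matrix.transpose_apply, Matrix.mul_apply, Finset.sum_mul]
    refine Finset.sum_congr rfl fun b _ => ?_
    ring
  have hterm_int : ∀ a a' b c, Integrable (fun ω => W j ω a b * W j ω a' c * M ω b c) μ := by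
    intro a a' b c
    exact (hMind a a' b c).integrable_mul
      (pair_moment hmeas hindep hgauss hj a a' b c).1 (hMint b c)
  constructor
  · intro a a'
    have h1 : Integrable (fun ω => ∑ c, ∑ b, W j ω a b * W j ω a' c * M ω b c) μ :=
      integrable_finset_sum _ fun c _ => integrable_finset_sum _ fun b _ => hterm_int a a' b c
    exact h1.congr (Filter.Eventually.of_forall fun ω => (hentry ω a a').symm)
  · intro a a'
    have hswap : ∫ ω, (W j ω * M ω * (W j ω)ᵀ) a a' ∂μ
        = ∑ c, ∑ b, ∫ ω, W j ω a b * W j ω a' c * M ω b c ∂μ := by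
      rw [show (fun ω => (W j ω * M ω * (W j ω)ᵀ) a a')
          = fun ω => ∑ c, ∑ b, W j ω a b * W j ω a' c * M ω b c from
        funext fun ω => hentry ω a a']
      rw [integral_finset_sum _ fun c _ =>
        integrable_finset_sum _ fun b _ => hterm_int a a' b c]
      exact Finset.sum_congr rfl fun c _ =>
        integral_finset_sum _ fun b _ => hterm_int a a' b c
    rw [hswap]
    have hterm : ∀ (c b : Fin (d j)), ∫ ω, W j ω a b * W j ω a' c * M ω b c ∂μ
        = (if a = a' ∧ b = c then ((σ j : ℝ)) ^ 2 else 0) * ∫ ω, M ω b c ∂μ := by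
      intro c b
      have h1 := (hMind a a' b c).integral_mul_eq_mul_integral
        (pair_moment hmeas hindep hgauss hj a a' b c).1.aestronglyMeasurable
        (hMint b c).aestronglyMeasurable
      have h2 := (pair_moment hmeas hindep hgauss hj a a' b c).2
      rw [← h2]
      simpa using h1
    simp_rw [hterm]
    by_cases ha : a = a'
    · subst ha
      rw [if_pos rfl, Finset.mul_sum]
      rw [Finset.sum_comm]
      refine Finset.sum_congr rfl fun b _ => ?_
      simp [Finset.sum_ite_eq, Finset.sum_ite_eq']
    · rw [if_neg ha]
      simp [ha]


omit [IsProbabilityMeasure μ] in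
lemma recW_congr_lt {v v' : Idx D d → ℝ} {m : ℕ}
    (h : ∀ p : Idx D d, (p.1 : ℕ) < m → v p = v' p) {j : ℕ} (hj : j < m) :
    recW D d v j = recW D d v' j := by
  by_cases hD : j < D
  · rw [recW_eq hD, recW_eq hD]
    funext a b
    exact h ⟨⟨j, hD⟩, (a, b)⟩ hj
  · rw [show recW D d v j = 0 from dif_neg hD, show recW D d v' j = 0 from dif_neg hD]

omit [IsProbabilityMeasure μ] in
lemma recW_congr_ge {v v' : Idx D d → ℝ} {m : ℕ}
    (h : ∀ p : Idx D d, m ≤ (p.1 : ℕ) → v p = v' p) {j : ℕ} (hj : m ≤ j) :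
    recW D d v j = recW D d v' j := by
  by_cases hD : j < D
  · rw [recW_eq hD, recW_eq hD]
    funext a b
    exact h ⟨⟨j, hD⟩, (a, b)⟩ hj
  · rw [show recW D d v j = 0 from dif_neg hD, show recW D d v' j = 0 from dif_neg hD]

omit [IsProbabilityMeasure μ] in
lemma prodUpTo_recW_eq {k : ℕ} (hk : k ≤ D) (ω : Ω) :
    prodUpTo d (recW D d fun p => W (p.1 : ℕ) ω p.2.1 p.2.2) k
      = prodUpTo d (fun j => W j ω) k :=
  prodUpTo_congr k fun j hj => by rw [recW_eq (lt_of_lt_of_le hj hk)]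

omit [IsProbabilityMeasure μ] in
lemma mulChain_recW_eq {i l : ℕ} (hk : i + l ≤ D) (ω : Ω) :
    mulChain d (recW D d fun p => W (p.1 : ℕ) ω p.2.1 p.2.2) i l
      = mulChain d (fun j => W j ω) i l :=
  mulChain_congr i l fun j _ hj' => by rw [recW_eq (lt_of_lt_of_le hj' hk)]

omit [IsProbabilityMeasure μ] in
/-- Continuity of an entry of `P * S * Pᵀ` for `P` a continuous matrix function. -/
lemma continuous_sandwich_entry {n m : Type*} [Fintype n] [Fintype m]
    {X : Type*} [TopologicalSpace X] {P : X → Matrix m n ℝ} (hP : Continuous P)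
    (S : Matrix n n ℝ) (b c : m) :
    Continuous fun v => (P v * S * (P v)ᵀ) b c := by
  have h : Continuous fun v => P v * S * (P v)ᵀ :=
    (hP.matrix_mul continuous_const).matrix_mul hP.matrix_transpose
  exact (continuous_apply c).comp ((continuous_apply b).comp h)

omit [IsProbabilityMeasure μ] in
/-- Independence of a degree-two monomial of the entries of `W k` from an entry of
`B_k Σ B_kᵀ`. -/
lemma indep_pair_prodEntry
    (hmeas : ∀ (j : ℕ) a b, Measurable fun ω => W j ω a b)
    (hindep : iIndepFun
      (fun (p : Idx D d) (ω : Ω) => W (p.1 : ℕ) ω p.2.1 p.2.2) μ)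
    (Sx : Matrix (Fin (d 0)) (Fin (d 0)) ℝ)
    {k : ℕ} (hk : k < D) (a a' : Fin (d (k + 1))) (b' c' : Fin (d k))
    (b c : Fin (d k)) :
    IndepFun (fun ω => W k ω a b' * W k ω a' c')
      (fun ω => (prodUpTo d (fun j => W j ω) k * Sx
        * (prodUpTo d (fun j => W j ω) k)ᵀ) b c) μ := by
  classical
  set F : (Idx D d → ℝ) → ℝ :=
    fun v => v ⟨⟨k, hk⟩, (a, b')⟩ * v ⟨⟨k, hk⟩, (a', c')⟩ with hF
  set G : (Idx D d → ℝ) → ℝ :=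
    fun v => (prodUpTo d (recW D d v) k * Sx * (prodUpTo d (recW D d v) k)ᵀ) b c with hG
  have h := indepFun_split (μ := μ) hmeas hindep (fun p => k ≤ (p.1 : ℕ))
    (F := F) (G := G)
    ((measurable_pi_apply _).mul (measurable_pi_apply _))
    (continuous_sandwich_entry (continuous_prodUpTo_recW k) Sx b c).measurable
    (fun v v' hvv' => by
      simp only [F]
      rw [hvv' _ (le_refl k), hvv' _ (le_refl k)])
    (fun v v' hvv' => by
      simp only [G]
      rw [prodUpTo_congr k fun j hj =>
        recW_congr_lt (fun p hp => hvv' p (by omega)) hj])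
  have e1 : (fun ω => F fun p => W (p.1 : ℕ) ω p.2.1 p.2.2)
      = fun ω => W k ω a b' * W k ω a' c' := rfl
  have e2 : (fun ω => G fun p => W (p.1 : ℕ) ω p.2.1 p.2.2)
      = fun ω => (prodUpTo d (fun j => W j ω) k * Sx
        * (prodUpTo d (fun j => W j ω) k)ᵀ) b c := by
    funext ω
    simp only [G]
    rw [prodUpTo_recW_eq (le_of_lt hk)]
  rw [e1, e2] at h
  exact h

omit [IsProbabilityMeasure μ] in
/-- Independence of a degree-two monomial of the entries of `W (i+l)` from an entry of
`A Aᵀ` where `A = mulChain i l`. -/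
lemma indep_pair_chainEntry
    (hmeas : ∀ (j : ℕ) a b, Measurable fun ω => W j ω a b)
    (hindep : iIndepFun
      (fun (p : Idx D d) (ω : Ω) => W (p.1 : ℕ) ω p.2.1 p.2.2) μ)
    {i l : ℕ} (hk : i + l < D) (a a' : Fin (d (i + l + 1))) (b' c' : Fin (d (i + l)))
    (b c : Fin (d (i + l))) :
    IndepFun (fun ω => W (i + l) ω a b' * W (i + l) ω a' c')
      (fun ω => (mulChain d (fun j => W j ω) i l
        * (1 : Matrix (Fin (d i)) (Fin (d i)) ℝ)
        * (mulChain d (fun j => W j ω) i l)ᵀ) b c) μ := by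
  classical
  set F : (Idx D d → ℝ) → ℝ :=
    fun v => v ⟨⟨i + l, hk⟩, (a, b')⟩ * v ⟨⟨i + l, hk⟩, (a', c')⟩ with hF
  set G : (Idx D d → ℝ) → ℝ :=
    fun v => (mulChain d (recW D d v) i l * (1 : Matrix (Fin (d i)) (Fin (d i)) ℝ)
      * (mulChain d (recW D d v) i l)ᵀ) b c with hG
  have h := indepFun_split (μ := μ) hmeas hindep (fun p => i + l ≤ (p.1 : ℕ))
    (F := F) (G := G)
    ((measurable_pi_apply _).mul (measurable_pi_apply _))
    (continuous_sandwich_entry (continuous_mulChain_recW i l) 1 b c).measurable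
    (fun v v' hvv' => by
      simp only [F]
      rw [hvv' _ (le_refl _), hvv' _ (le_refl _)])
    (fun v v' hvv' => by
      simp only [G]
      rw [mulChain_congr i l fun j hj hj' =>
        recW_congr_lt (fun p hp => hvv' p (by omega)) hj'])
  have e1 : (fun ω => F fun p => W (p.1 : ℕ) ω p.2.1 p.2.2)
      = fun ω => W (i + l) ω a b' * W (i + l) ω a' c' := rfl
  have e2 : (fun ω => G fun p => W (p.1 : ℕ) ω p.2.1 p.2.2)
      = fun ω => (mulChain d (fun j => W j ω) i l
        * (1 : Matrix (Fin (d i)) (Fin (d i)) ℝ)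
        * (mulChain d (fun j => W j ω) i l)ᵀ) b c := by
    funext ω
    simp only [G]
    rw [mulChain_recW_eq (le_of_lt hk)]
  rw [e1, e2] at h
  exact h


lemma chainB
    (hmeas : ∀ (j : ℕ) a b, Measurable fun ω => W j ω a b)
    (hindep : iIndepFun
      (fun (p : Idx D d) (ω : Ω) => W (p.1 : ℕ) ω p.2.1 p.2.2) μ)
    (hgauss : ∀ j : ℕ, j < D → ∀ a b,
      Measure.map (fun ω => W j ω a b) μ = gaussianReal 0 (σ j ^ 2))
    (Sx : Matrix (Fin (d 0)) (Fin (d 0)) ℝ) :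
    ∀ k, k ≤ D →
      ((∀ b c, Integrable (fun ω =>
          (prodUpTo d (fun j => W j ω) k * Sx * (prodUpTo d (fun j => W j ω) k)ᵀ) b c) μ)
        ∧ (∑ x, ∫ ω, (prodUpTo d (fun j => W j ω) k * Sx
            * (prodUpTo d (fun j => W j ω) k)ᵀ) x x ∂μ)
          = Sx.trace * ∏ j ∈ Finset.range k, (((σ j : ℝ)) ^ 2 * (d (j + 1) : ℝ))) := by
  intro k
  induction k with
  | zero =>
    intro _
    have hS : ∀ ω : Ω, prodUpTo d (fun j => W j ω) 0 * Sx
        * (prodUpTo d (fun j => W j ω) 0)ᵀ = Sx := by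
      intro ω
      show (1 : Matrix (Fin (d 0)) (Fin (d 0)) ℝ) * Sx
        * (1 : Matrix (Fin (d 0)) (Fin (d 0)) ℝ)ᵀ = Sx
      simp
    constructor
    · intro b c
      simp_rw [hS]
      exact integrable_const _
    · simp_rw [hS]
      simp [Matrix.trace, Matrix.diag]
  | succ k ih =>
    intro hk1
    have hk : k < D := lt_of_lt_of_le (Nat.lt_succ_self k) hk1
    obtain ⟨ihint, ihsum⟩ := ih (le_of_lt hk)
    set M : Ω → Matrix (Fin (d k)) (Fin (d k)) ℝ :=
      fun ω => prodUpTo d (fun j => W j ω) k * Sx * (prodUpTo d (fun j => W j ω) k)ᵀ with hM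
    have hstep := step_matrix hmeas hindep hgauss hk M ihint
      (fun a a' b c => indep_pair_prodEntry hmeas hindep Sx hk a a' b c b c)
    have hrel : ∀ ω : Ω, prodUpTo d (fun j => W j ω) (k + 1) * Sx
        * (prodUpTo d (fun j => W j ω) (k + 1))ᵀ = W k ω * M ω * (W k ω)ᵀ := by
      intro ω
      show (W k ω * prodUpTo d (fun j => W j ω) k) * Sx
        * (W k ω * prodUpTo d (fun j => W j ω) k)ᵀ = _
      rw [Matrix.transpose_mul, hM]
      simp only [Matrix.mul_assoc]
    constructor
    · intro b c
      simp_rw [hrel]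
      exact hstep.1 b c
    · have hdiag : ∀ x : Fin (d (k + 1)),
          ∫ ω, (prodUpTo d (fun j => W j ω) (k + 1) * Sx
            * (prodUpTo d (fun j => W j ω) (k + 1))ᵀ) x x ∂μ
          = ((σ k : ℝ)) ^ 2 * ∑ y, ∫ ω, M ω y y ∂μ := by
        intro x
        simp_rw [hrel]
        rw [hstep.2 x x, if_pos rfl]
      rw [Finset.sum_congr rfl fun x _ => hdiag x]
      rw [Finset.sum_const, Finset.card_univ, Fintype.card_fin, nsmul_eq_mul]
      rw [show (∑ y, ∫ ω, M ω y y ∂μ)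
        = Sx.trace * ∏ j ∈ Finset.range k, (((σ j : ℝ)) ^ 2 * (d (j + 1) : ℝ)) from ihsum]
      rw [Finset.prod_range_succ]
      ring

lemma chainA
    (hmeas : ∀ (j : ℕ) a b, Measurable fun ω => W j ω a b)
    (hindep : iIndepFun
      (fun (p : Idx D d) (ω : Ω) => W (p.1 : ℕ) ω p.2.1 p.2.2) μ)
    (hgauss : ∀ j : ℕ, j < D → ∀ a b,
      Measure.map (fun ω => W j ω a b) μ = gaussianReal 0 (σ j ^ 2))
    (i : ℕ) :
    ∀ l, i + l ≤ D →
      ((∀ b c, Integrable (fun ω =>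
          (mulChain d (fun j => W j ω) i l * (1 : Matrix (Fin (d i)) (Fin (d i)) ℝ)
            * (mulChain d (fun j => W j ω) i l)ᵀ) b c) μ)
        ∧ (∑ x, ∫ ω, (mulChain d (fun j => W j ω) i l
            * (1 : Matrix (Fin (d i)) (Fin (d i)) ℝ)
            * (mulChain d (fun j => W j ω) i l)ᵀ) x x ∂μ)
          = (d i : ℝ) * ∏ j ∈ Finset.Ico i (i + l), (((σ j : ℝ)) ^ 2 * (d (j + 1) : ℝ))) := by
  intro l
  induction l with
  | zero =>
    intro _
    have hS : ∀ ω : Ω, mulChain d (fun j => W j ω) i 0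
        * (1 : Matrix (Fin (d i)) (Fin (d i)) ℝ)
        * (mulChain d (fun j => W j ω) i 0)ᵀ = (1 : Matrix (Fin (d i)) (Fin (d i)) ℝ) := by
      intro ω
      show (1 : Matrix (Fin (d i)) (Fin (d i)) ℝ) * 1
        * (1 : Matrix (Fin (d i)) (Fin (d i)) ℝ)ᵀ = 1
      simp
    constructor
    · intro b c
      simp_rw [hS]
      exact integrable_const _
    · simp_rw [hS]
      simp [Matrix.one_apply]
  | succ l ih =>
    intro hk1
    have hk : i + l < D := by omega
    obtain ⟨ihint, ihsum⟩ := ih (by omega)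
    set M : Ω → Matrix (Fin (d (i + l))) (Fin (d (i + l))) ℝ :=
      fun ω => mulChain d (fun j => W j ω) i l * (1 : Matrix (Fin (d i)) (Fin (d i)) ℝ)
        * (mulChain d (fun j => W j ω) i l)ᵀ with hM
    have hstep := step_matrix hmeas hindep hgauss hk M ihint
      (fun a a' b c => indep_pair_chainEntry hmeas hindep hk a a' b c b c)
    have hrel : ∀ ω : Ω, mulChain d (fun j => W j ω) i (l + 1)
        * (1 : Matrix (Fin (d i)) (Fin (d i)) ℝ)
        * (mulChain d (fun j => W j ω) i (l + 1))ᵀ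
        = W (i + l) ω * M ω * (W (i + l) ω)ᵀ := by
      intro ω
      show (W (i + l) ω * mulChain d (fun j => W j ω) i l)
        * (1 : Matrix (Fin (d i)) (Fin (d i)) ℝ)
        * (W (i + l) ω * mulChain d (fun j => W j ω) i l)ᵀ = _
      rw [Matrix.transpose_mul, hM]
      simp only [Matrix.mul_assoc]
    constructor
    · intro b c
      simp_rw [hrel]
      exact hstep.1 b c
    · have hdiag : ∀ x : Fin (d (i + l + 1)),
          ∫ ω, (mulChain d (fun j => W j ω) i (l + 1)
            * (1 : Matrix (Fin (d i)) (Fin (d i)) ℝ)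
            * (mulChain d (fun j => W j ω) i (l + 1))ᵀ) x x ∂μ
          = ((σ (i + l) : ℝ)) ^ 2 * ∑ y, ∫ ω, M ω y y ∂μ := by
        intro x
        simp_rw [hrel]
        rw [hstep.2 x x, if_pos rfl]
      show (∑ x : Fin (d (i + l + 1)),
          ∫ ω, (mulChain d (fun j => W j ω) i (l + 1)
            * (1 : Matrix (Fin (d i)) (Fin (d i)) ℝ)
            * (mulChain d (fun j => W j ω) i (l + 1))ᵀ) x x ∂μ)
        = (d i : ℝ) * ∏ j ∈ Finset.Ico i (i + l + 1), (((σ j : ℝ)) ^ 2 * (d (j + 1) : ℝ))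
      rw [Finset.sum_congr rfl fun x _ => hdiag x]
      rw [Finset.sum_const, Finset.card_univ, Fintype.card_fin, nsmul_eq_mul]
      rw [show (∑ y, ∫ ω, M ω y y ∂μ)
        = (d i : ℝ) * ∏ j ∈ Finset.Ico i (i + l), (((σ j : ℝ)) ^ 2 * (d (j + 1) : ℝ))
        from ihsum]
      rw [Finset.prod_Ico_succ_top (Nat.le_add_right i l)]
      ring


omit [IsProbabilityMeasure μ] in
/-- Independence of `Tr(A_kᵀA_k)` and `Tr(B_k Σ B_kᵀ)`. -/
lemma indep_fg
    (hmeas : ∀ (j : ℕ) a b, Measurable fun ω => W j ω a b)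
    (hindep : iIndepFun
      (fun (p : Idx D d) (ω : Ω) => W (p.1 : ℕ) ω p.2.1 p.2.2) μ)
    (Sx : Matrix (Fin (d 0)) (Fin (d 0)) ℝ) {k : ℕ} (hk : k < D) :
    IndepFun
      (fun ω => ((mulChain d (fun j => W j ω) (k + 1) (D - (k + 1)))ᵀ
        * mulChain d (fun j => W j ω) (k + 1) (D - (k + 1))).trace)
      (fun ω => (prodUpTo d (fun j => W j ω) k * Sx
        * (prodUpTo d (fun j => W j ω) k)ᵀ).trace) μ := by
  classical
  set F : (Idx D d → ℝ) → ℝ :=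
    fun v => ((mulChain d (recW D d v) (k + 1) (D - (k + 1)))ᵀ
      * mulChain d (recW D d v) (k + 1) (D - (k + 1))).trace with hF
  set G : (Idx D d → ℝ) → ℝ :=
    fun v => (prodUpTo d (recW D d v) k * Sx * (prodUpTo d (recW D d v) k)ᵀ).trace with hG
  have hFm : Measurable F :=
    (((continuous_mulChain_recW _ _).matrix_transpose.matrix_mul
      (continuous_mulChain_recW _ _)).matrix_trace).measurable
  have hGm : Measurable G :=
    ((((continuous_prodUpTo_recW k).matrix_mul continuous_const).matrix_mul
      (continuous_prodUpTo_recW k).matrix_transpose).matrix_trace).measurable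
  have h := indepFun_split (μ := μ) hmeas hindep (fun p => k + 1 ≤ (p.1 : ℕ))
    (F := F) (G := G) hFm hGm
    (fun v v' hvv' => by
      simp only [F]
      rw [mulChain_congr (k + 1) (D - (k + 1)) fun j hj hj' =>
        recW_congr_ge (fun p hp => hvv' p hp) hj])
    (fun v v' hvv' => by
      simp only [G]
      rw [prodUpTo_congr k fun j hj =>
        recW_congr_lt (m := k + 1) (fun p hp => hvv' p (by omega)) (by omega)])
  have e1 : (fun ω => F fun p => W (p.1 : ℕ) ω p.2.1 p.2.2)
      = fun ω => ((mulChain d (fun j => W j ω) (k + 1) (D - (k + 1)))ᵀ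
        * mulChain d (fun j => W j ω) (k + 1) (D - (k + 1))).trace := by
    funext ω
    simp only [F]
    rw [mulChain_recW_eq (by omega)]
  have e2 : (fun ω => G fun p => W (p.1 : ℕ) ω p.2.1 p.2.2)
      = fun ω => (prodUpTo d (fun j => W j ω) k * Sx
        * (prodUpTo d (fun j => W j ω) k)ᵀ).trace := by
    funext ω
    simp only [G]
    rw [prodUpTo_recW_eq (le_of_lt hk)]
  rw [e1, e2] at h
  exact h

end AuxProb

section Arith

lemma erase_range_eq {k D : ℕ} (hk : k < D) :
    (Finset.range D).erase k = Finset.range k ∪ Finset.Ico (k + 1) D := by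
  ext j
  simp only [Finset.mem_erase, Finset.mem_range, Finset.mem_union, Finset.mem_Ico]
  omega

lemma prod_erase_split (f : ℕ → ℝ) {k D : ℕ} (hk : k < D) :
    ∏ j ∈ (Finset.range D).erase k, f j
      = (∏ j ∈ Finset.range k, f j) * ∏ j ∈ Finset.Ico (k + 1) D, f j := by
  rw [erase_range_eq hk, Finset.prod_union]
  rw [Finset.disjoint_left]
  intro j hj hj'
  rw [Finset.mem_range] at hj
  rw [Finset.mem_Ico] at hj'
  omega

lemma prod_mid (f : ℕ → ℝ) {k D : ℕ} (hk : k < D) :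
    (∏ j ∈ Finset.range k, f j) * f k * ∏ j ∈ Finset.Ico (k + 1) D, f j
      = ∏ j ∈ Finset.range D, f j := by
  rw [← Finset.prod_range_succ, Finset.range_eq_Ico, Finset.range_eq_Ico]
  exact Finset.prod_Ico_consecutive f (Nat.zero_le (k + 1)) (by omega : k + 1 ≤ D)

lemma prod_shift (f : ℕ → ℝ) {D : ℕ} (hD : 1 ≤ D) :
    ∏ j ∈ Finset.range D, f (j + 1) = f D * ∏ m ∈ Finset.Icc 1 (D - 1), f m := by
  have h1 : ∏ m ∈ Finset.Ico 1 (D + 1), f m = ∏ j ∈ Finset.range D, f (j + 1) := by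
    rw [Finset.prod_Ico_eq_prod_range]
    simp only [Nat.add_sub_cancel]
    exact Finset.prod_congr rfl fun i _ => by rw [Nat.add_comm]
  rw [← h1, Finset.Ico_add_one_right_eq_Icc]
  have h2 : D = (D - 1) + 1 := by omega
  rw [h2, Finset.prod_Icc_succ_top (by omega)]
  rw [← h2]
  ring

end Arith

/-- The sharpness `T = Σ_{k=1}^D Tr[A_kᵀA_k]·Tr[B_k Sx B_kᵀ]` of a `D`-layer deep
linear network (`A_k = W_D⋯W_{k+1}`, `A_D = I`; `B_k = W_{k−1}⋯W_1`, `B_1 = I`);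
indices are 0-based here: the paper's `W_k` is `W (k-1)`. -/
noncomputable def sharpnessT (d : ℕ → ℕ) (W : ∀ k, Matrix (Fin (d (k + 1))) (Fin (d k)) ℝ)
    (Sx : Matrix (Fin (d 0)) (Fin (d 0)) ℝ) (D : ℕ) : ℝ :=
  ∑ k ∈ Finset.range D,
    ((mulChain d W (k + 1) (D - (k + 1)))ᵀ * mulChain d W (k + 1) (D - (k + 1))).trace *
      (prodUpTo d W k * Sx * (prodUpTo d W k)ᵀ).trace

/-- Expected sharpness at Gaussian initialization: for a `D`-layer linear network whose
weight entries are jointly independent centered Gaussians (entries of `W_k` of variance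
`σ_k²`), the expected sharpness is
`E[T] = d_y (∏_{k=2}^D d_k) Tr(Σ_x) Σ_{k=1}^D ∏_{j≠k} σ_j²`; in particular, if
`σ_k = σ` for all layers and all intermediate dimensions equal `d`, then
`E[T] = D d_y Tr(Σ_x) (d σ²)^{D−1}`. -/
theorem expected_initial_sharpness (D : ℕ) (hD : 1 ≤ D) (d : ℕ → ℕ)
    {Ω : Type*} [MeasurableSpace Ω] (μ : Measure Ω) [IsProbabilityMeasure μ]
    (W : ∀ j : ℕ, Ω → Matrix (Fin (d (j + 1))) (Fin (d j)) ℝ)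
    (σ : ℕ → NNReal)
    (hmeas : ∀ (j : ℕ) a b, Measurable fun ω => W j ω a b)
    (hindep : iIndepFun
      (fun (p : Σ j : Fin D, Fin (d ((j : ℕ) + 1)) × Fin (d (j : ℕ))) (ω : Ω) =>
        W (p.1 : ℕ) ω p.2.1 p.2.2) μ)
    (hgauss : ∀ j : ℕ, j < D → ∀ a b,
      Measure.map (fun ω => W j ω a b) μ = gaussianReal 0 (σ j ^ 2))
    (Sx : Matrix (Fin (d 0)) (Fin (d 0)) ℝ) (hSx : Sx.PosSemidef) :
    (∫ ω, sharpnessT d (fun k => W k ω) Sx D ∂μ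
        = (d D : ℝ) * (∏ k ∈ Finset.Icc 1 (D - 1), (d k : ℝ)) * Sx.trace
          * ∑ k ∈ Finset.range D, ∏ j ∈ (Finset.range D).erase k, (σ j : ℝ) ^ 2)
    ∧ ∀ (σc : NNReal) (dc : ℕ), (∀ k, k < D → σ k = σc) →
        (∀ k, 1 ≤ k → k ≤ D - 1 → d k = dc) →
        ∫ ω, sharpnessT d (fun k => W k ω) Sx D ∂μ
          = (D : ℝ) * (d D : ℝ) * Sx.trace * ((dc : ℝ) * (σc : ℝ) ^ 2) ^ (D - 1) := by
  classical
  set gk : ℕ → Ω → ℝ := fun k ω =>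
    ((mulChain d (fun j => W j ω) (k + 1) (D - (k + 1)))ᵀ
      * mulChain d (fun j => W j ω) (k + 1) (D - (k + 1))).trace with hgk
  set fk : ℕ → Ω → ℝ := fun k ω =>
    (prodUpTo d (fun j => W j ω) k * Sx * (prodUpTo d (fun j => W j ω) k)ᵀ).trace with hfk
  have hT : ∀ ω, sharpnessT d (fun k => W k ω) Sx D
      = ∑ k ∈ Finset.range D, gk k ω * fk k ω := fun ω => rfl
  -- facts about `gk`
  have hg : ∀ k, k < D → Integrable (gk k) μ ∧
      ∫ ω, gk k ω ∂μ
        = (d (k + 1) : ℝ) * ∏ j ∈ Finset.Ico (k + 1) D, (((σ j : ℝ)) ^ 2 * (d (j + 1) : ℝ)) := by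
    intro k hk
    have hle : (k + 1) + (D - (k + 1)) ≤ D := by omega
    obtain ⟨hint, hsum⟩ := chainA hmeas hindep hgauss (k + 1) (D - (k + 1)) hle
    have hgrel : ∀ ω, gk k ω
        = ∑ x, (mulChain d (fun j => W j ω) (k + 1) (D - (k + 1))
          * (1 : Matrix (Fin (d (k + 1))) (Fin (d (k + 1))) ℝ)
          * (mulChain d (fun j => W j ω) (k + 1) (D - (k + 1)))ᵀ) x x := by
      intro ω
      simp only [gk]
      rw [Matrix.trace_mul_comm]
      simp [Matrix.trace, Matrix.diag, Matrix.mul_one]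
    have hIcoEq : Finset.Ico (k + 1) ((k + 1) + (D - (k + 1))) = Finset.Ico (k + 1) D := by
      congr 1
      omega
    rw [hIcoEq] at hsum
    constructor
    · have h1 := integrable_finset_sum (μ := μ) Finset.univ
        (fun x (_ : x ∈ Finset.univ) => hint x x)
      exact h1.congr (Filter.Eventually.of_forall fun ω => (hgrel ω).symm)
    · rw [show (fun ω => gk k ω) = fun ω =>
          ∑ x, (mulChain d (fun j => W j ω) (k + 1) (D - (k + 1))
            * (1 : Matrix (Fin (d (k + 1))) (Fin (d (k + 1))) ℝ)
            * (mulChain d (fun j => W j ω) (k + 1) (D - (k + 1)))ᵀ) x x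
        from funext hgrel]
      rw [integral_finset_sum _ (fun x _ => hint x x)]
      exact hsum
  -- facts about `fk`
  have hf : ∀ k, k < D → Integrable (fk k) μ ∧
      ∫ ω, fk k ω ∂μ
        = Sx.trace * ∏ j ∈ Finset.range k, (((σ j : ℝ)) ^ 2 * (d (j + 1) : ℝ)) := by
    intro k hk
    obtain ⟨hint, hsum⟩ := chainB hmeas hindep hgauss Sx k (le_of_lt hk)
    have hfrel : ∀ ω, fk k ω
        = ∑ x, (prodUpTo d (fun j => W j ω) k * Sx
          * (prodUpTo d (fun j => W j ω) k)ᵀ) x x := by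
      intro ω
      simp [fk, Matrix.trace, Matrix.diag]
    constructor
    · have h1 := integrable_finset_sum (μ := μ) Finset.univ
        (fun x (_ : x ∈ Finset.univ) => hint x x)
      exact h1.congr (Filter.Eventually.of_forall fun ω => (hfrel ω).symm)
    · rw [show (fun ω => fk k ω) = fun ω =>
          ∑ x, (prodUpTo d (fun j => W j ω) k * Sx
            * (prodUpTo d (fun j => W j ω) k)ᵀ) x x
        from funext hfrel]
      rw [integral_finset_sum _ (fun x _ => hint x x)]
      exact hsum
  have hprodint : ∀ k ∈ Finset.range D, Integrable (fun ω => gk k ω * fk k ω) μ := by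
    intro k hk'
    have hk := Finset.mem_range.mp hk'
    exact (indep_fg hmeas hindep Sx hk).integrable_mul (hg k hk).1 (hf k hk).1
  have hkey : ∫ ω, sharpnessT d (fun k => W k ω) Sx D ∂μ
      = (d D : ℝ) * (∏ k ∈ Finset.Icc 1 (D - 1), (d k : ℝ)) * Sx.trace
        * ∑ k ∈ Finset.range D, ∏ j ∈ (Finset.range D).erase k, (σ j : ℝ) ^ 2 := by
    rw [show (fun ω => sharpnessT d (fun k => W k ω) Sx D)
        = fun ω => ∑ k ∈ Finset.range D, gk k ω * fk k ω from funext hT]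
    rw [integral_finset_sum _ hprodint]
    have hval : ∀ k ∈ Finset.range D, ∫ ω, gk k ω * fk k ω ∂μ
        = (d D : ℝ) * (∏ m ∈ Finset.Icc 1 (D - 1), (d m : ℝ)) * Sx.trace
          * ∏ j ∈ (Finset.range D).erase k, (σ j : ℝ) ^ 2 := by
      intro k hk'
      have hk := Finset.mem_range.mp hk'
      have hmul := (indep_fg hmeas hindep Sx hk).integral_mul_eq_mul_integral
        (hg k hk).1.aestronglyMeasurable (hf k hk).1.aestronglyMeasurable
      have hmul' : ∫ ω, gk k ω * fk k ω ∂μ = (∫ ω, gk k ω ∂μ) * ∫ ω, fk k ω ∂μ := hmul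
      rw [hmul', (hg k hk).2, (hf k hk).2]
      -- arithmetic
      have e1 : (d D : ℝ) * ∏ m ∈ Finset.Icc 1 (D - 1), (d m : ℝ)
          = ∏ j ∈ Finset.range D, (d (j + 1) : ℝ) :=
        (prod_shift (fun m => (d m : ℝ)) hD).symm
      have e2 : ∏ j ∈ Finset.range D, (d (j + 1) : ℝ)
          = (∏ j ∈ Finset.range k, (d (j + 1) : ℝ)) * (d (k + 1) : ℝ)
            * ∏ j ∈ Finset.Ico (k + 1) D, (d (j + 1) : ℝ) :=
        (prod_mid (fun j => (d (j + 1) : ℝ)) hk).symm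
      have e3 : ∏ j ∈ (Finset.range D).erase k, (σ j : ℝ) ^ 2
          = (∏ j ∈ Finset.range k, (σ j : ℝ) ^ 2)
            * ∏ j ∈ Finset.Ico (k + 1) D, (σ j : ℝ) ^ 2 :=
        prod_erase_split (fun j => ((σ j : ℝ)) ^ 2) hk
      rw [Finset.prod_mul_distrib, Finset.prod_mul_distrib, e3, mul_assoc ((d D : ℝ) * _),
        e1, e2]
      ring
    rw [Finset.sum_congr rfl hval, ← Finset.mul_sum]
  refine ⟨hkey, ?_⟩
  intro σc dc hσ hd
  rw [hkey]
  have h1 : ∀ k ∈ Finset.range D, ∏ j ∈ (Finset.range D).erase k, (σ j : ℝ) ^ 2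
      = (((σc : ℝ)) ^ 2) ^ (D - 1) := by
    intro k hk'
    rw [Finset.prod_congr rfl (fun j hj => by
      rw [hσ j (Finset.mem_range.mp (Finset.mem_of_mem_erase hj))]),
      Finset.prod_const, Finset.card_erase_of_mem hk', Finset.card_range]
  have h2 : ∏ m ∈ Finset.Icc 1 (D - 1), (d m : ℝ) = (dc : ℝ) ^ (D - 1) := by
    rw [Finset.prod_congr rfl (fun m hm => by
      rw [hd m (Finset.mem_Icc.mp hm).1 (Finset.mem_Icc.mp hm).2]),
      Finset.prod_const, Nat.card_Icc, Nat.add_sub_cancel]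
  rw [Finset.sum_congr rfl h1, Finset.sum_const, Finset.card_range, nsmul_eq_mul, h2, mul_pow]
  ring
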